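/- For all integers m and n, with x = 4(7n^2-12mn-18m^2)(17n^2+30mn+18m^2)(23n^2+48mn+18m^2), c2 = 3(7n^2-12mn-18m^2)(11n^2+12mn+18m^2)(19n^2+36mn+18m^2), and d2 = (7n^2-12mn-18m^2)(1685n^4+6288mn^3+9180m^2n^2+6048m^3n+1620m^4), the identity x^2 + c2^2 = d2^2 holds. -/
import Mathlib


theorem stmt_14 (m n x c2 d2 : ℤ)
    (hx : x = 4*(7*n^2-12*m*n-18*m^2)*(17*n^2+30*m*n+18*m^2)*(23*n^2+48*m*n+18*m^2))
    (hc2 : c2 = 3*(7*n^2-12*m*n-18*m^2)*(11*n^2+12*m*n+18*m^2)*(19*n^2+36*m*n+18*m^2))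
    (hd2 : d2 = (7*n^2-12*m*n-18*m^2)*(1685*n^4+6288*m*n^3+9180*m^2*n^2+6048*m^3*n+1620*m^4)) :
    x^2 + c2^2 = d2^2 := by subst hx hc2 hd2; ring
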